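/- Let p:[0,1]→[0,1] be continuous with q = 1−p, and assume q(0) = 0 and p(1) > 0. Then the singleton {0} is a Q-absorbing compact set, and every nonempty Q-absorbing compact subset of [0,1] contains 0; consequently {0} is the unique minimal nonempty Q-absorbing compact set. -/

import Mathlib

open MeasureTheory Filter Set

/-- The Diaconis–Friedman transition kernel:
`Q(x,A) = p(x)·λ{t ∈ [0,1] : tx ∈ A} + q(x)·λ{t ∈ [0,1] : tx+1−t ∈ A}`. -/
noncomputable def DFkernel (p : ℝ → ℝ) (x : ℝ) (A : Set ℝ) : ENNReal :=
  ENNReal.ofReal (p x) * volume {t ∈ Set.Icc (0 : ℝ) 1 | t * x ∈ A} +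
    ENNReal.ofReal (1 - p x) * volume {t ∈ Set.Icc (0 : ℝ) 1 | t * x + 1 - t ∈ A}

/-- `K` is a `Q`-absorbing set: `Q(x, [0,1]∖K) = 0` for every `x ∈ K`. -/
def DFAbsorbing (p : ℝ → ℝ) (K : Set ℝ) : Prop :=
  ∀ x ∈ K, DFkernel p x (Set.Icc (0 : ℝ) 1 \ K) = 0

open MeasureTheory Filter Set

/-- A closed set whose complement in `[0,1]` is null contains `[0,1]`. -/
lemma closed_of_null_diff (C : Set ℝ) (hC : IsClosed C)
    (h : volume (Set.Icc (0 : ℝ) 1 \ C) = 0) : Set.Icc (0 : ℝ) 1 ⊆ C := by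
  intro y hy
  by_contra hyC
  obtain ⟨ε, hε, hball⟩ := Metric.isOpen_iff.mp hC.isOpen_compl y hyC
  set a := max 0 (y - ε) with ha
  set b := min 1 (y + ε) with hb
  have hy0 := hy.1
  have hy1 := hy.2
  have hab : a < b := by
    apply max_lt
    · exact lt_min (by norm_num) (by linarith)
    · exact lt_min (by linarith) (by linarith)
  have hsub : Set.Ioo a b ⊆ Set.Icc (0 : ℝ) 1 \ C := by
    intro z hz
    have hza : a < z := hz.1
    have hzb : z < b := hz.2
    have h0 : (0:ℝ) ≤ a := le_max_left _ _
    have h1 : b ≤ 1 := min_le_left _ _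
    refine ⟨⟨by linarith, by linarith⟩, ?_⟩
    intro hzC
    have : z ∈ Metric.ball y ε := by
      have h2 : y - ε ≤ a := le_max_right _ _
      have h3 : b ≤ y + ε := min_le_right _ _
      rw [Metric.mem_ball, Real.dist_eq, abs_lt]
      constructor <;> linarith
    exact hball this hzC
  have := measure_mono (μ := volume) hsub
  rw [h] at this
  have h0 : volume (Set.Ioo a b) = 0 := le_antisymm this zero_le'
  rw [Real.volume_Ioo] at h0
  rw [ENNReal.ofReal_eq_zero] at h0
  linarith

theorem stmt17 (p : ℝ → ℝ) (hpcont : ContinuousOn p (Set.Icc (0 : ℝ) 1))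
    (hp01 : ∀ x ∈ Set.Icc (0 : ℝ) 1, p x ∈ Set.Icc (0 : ℝ) 1)
    (hq0 : 1 - p 0 = 0) (hp1 : 0 < p 1) :
    DFAbsorbing p {(0 : ℝ)} ∧
    (∀ K : Set ℝ, K ⊆ Set.Icc (0 : ℝ) 1 → IsCompact K → K.Nonempty →
      DFAbsorbing p K → (0 : ℝ) ∈ K) ∧
    ∀ K : Set ℝ, K ⊆ Set.Icc (0 : ℝ) 1 → IsCompact K → K.Nonempty → DFAbsorbing p K →
      (∀ K' : Set ℝ, K' ⊆ K → IsCompact K' → K'.Nonempty → DFAbsorbing p K' → K' = K) →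
      K = {(0 : ℝ)} := by
  -- part 2 first, as auxiliary
  have part2 : ∀ K : Set ℝ, K ⊆ Set.Icc (0 : ℝ) 1 → IsCompact K → K.Nonempty →
      DFAbsorbing p K → (0 : ℝ) ∈ K := by
    intro K hKsub hKcomp hKne hKabs
    by_contra h0K
    have hKclosed : IsClosed K := hKcomp.isClosed
    -- the minimum of K
    set m := sInf K with hm
    have hmK : m ∈ K := hKcomp.sInf_mem hKne
    have hm0 : 0 < m := by
      rcases lt_or_eq_of_le (hKsub hmK).1 with h | h
      · exact h
      · exact absurd (h ▸ hmK) h0K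
    have hm1 : m ≤ 1 := (hKsub hmK).2
    -- step A: p m = 0 (i.e. ¬ 0 < p m)
    have habs_m := hKabs m hmK
    unfold DFkernel at habs_m
    obtain ⟨h1, h2⟩ := add_eq_zero.mp habs_m
    have hpm : ¬ (0 < p m) := by
      intro hpm
      rcases mul_eq_zero.mp h1 with h | h
      · rw [ENNReal.ofReal_eq_zero] at h; linarith
      · -- Ico 0 1 ⊆ the set
        have hsub : Set.Ico (0:ℝ) 1 ⊆ {t ∈ Set.Icc (0 : ℝ) 1 | t * m ∈ Set.Icc (0:ℝ) 1 \ K} := by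
          intro t ht
          have ht0 := ht.1
          have ht1 := ht.2
          refine ⟨⟨ht0, ht1.le⟩, ⟨⟨by positivity, by nlinarith⟩, ?_⟩⟩
          intro htK
          have : m ≤ t * m := csInf_le (hKcomp.bddBelow) htK
          nlinarith
        have := measure_mono (μ := volume) hsub
        rw [h] at this
        have h0 : volume (Set.Ico (0:ℝ) 1) = 0 := le_antisymm this zero_le'
        rw [Real.volume_Ico] at h0
        rw [ENNReal.ofReal_eq_zero] at h0
        linarith
    have hpm0 : p m ≤ 0 := not_lt.mp hpm
    -- hence the second factor is nonzero, so the second measure is zero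
    have hv2 : volume {t ∈ Set.Icc (0 : ℝ) 1 | t * m + 1 - t ∈ Set.Icc (0:ℝ) 1 \ K} = 0 := by
      rcases mul_eq_zero.mp h2 with h | h
      · rw [ENNReal.ofReal_eq_zero] at h; linarith
      · exact h
    -- rewrite that set as Icc \ preimage
    have hset : {t ∈ Set.Icc (0 : ℝ) 1 | t * m + 1 - t ∈ Set.Icc (0:ℝ) 1 \ K}
        = Set.Icc (0:ℝ) 1 \ {t : ℝ | t * m + 1 - t ∈ K} := by
      ext t
      simp only [Set.mem_setOf_eq, Set.mem_diff, Set.mem_sep_iff, Set.mem_Icc]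
      constructor
      · rintro ⟨ht, _, htK⟩; exact ⟨ht, htK⟩
      · rintro ⟨ht, htK⟩
        exact ⟨ht, ⟨by nlinarith [ht.1, ht.2], by nlinarith [ht.1, ht.2]⟩, htK⟩
    rw [hset] at hv2
    have hCclosed : IsClosed {t : ℝ | t * m + 1 - t ∈ K} :=
      hKclosed.preimage (by continuity)
    have h1K : (1:ℝ) ∈ K := by
      have := closed_of_null_diff _ hCclosed hv2 ⟨le_refl 0, by norm_num⟩
      simpa using this
    -- step B: absorbing at 1
    have habs_1 := hKabs 1 h1K
    unfold DFkernel at habs_1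
    obtain ⟨h1', _⟩ := add_eq_zero.mp habs_1
    have hv1 : volume {t ∈ Set.Icc (0 : ℝ) 1 | t * 1 ∈ Set.Icc (0:ℝ) 1 \ K} = 0 := by
      rcases mul_eq_zero.mp h1' with h | h
      · rw [ENNReal.ofReal_eq_zero] at h; linarith
      · exact h
    have hset1 : {t ∈ Set.Icc (0 : ℝ) 1 | t * 1 ∈ Set.Icc (0:ℝ) 1 \ K}
        = Set.Icc (0:ℝ) 1 \ K := by
      ext t
      simp only [mul_one, Set.mem_setOf_eq, Set.mem_diff, Set.mem_sep_iff]
      tauto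
    rw [hset1] at hv1
    have := closed_of_null_diff _ hKclosed hv1 ⟨le_refl 0, by norm_num⟩
    exact h0K this
  refine ⟨?_, part2, ?_⟩
  · -- {0} is absorbing
    intro x hx
    rw [Set.mem_singleton_iff] at hx
    subst hx
    unfold DFkernel
    have hs : {t ∈ Set.Icc (0 : ℝ) 1 | t * 0 ∈ Set.Icc (0:ℝ) 1 \ {(0:ℝ)}} = ∅ := by
      ext t
      simp
    rw [hs, hq0]
    simp
  · -- minimality
    intro K hKsub hKcomp hKne hKabs hmin
    have h0K : (0:ℝ) ∈ K := part2 K hKsub hKcomp hKne hKabs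
    have habs0 : DFAbsorbing p {(0:ℝ)} := by
      intro x hx
      rw [Set.mem_singleton_iff] at hx
      subst hx
      unfold DFkernel
      have hs : {t ∈ Set.Icc (0 : ℝ) 1 | t * 0 ∈ Set.Icc (0:ℝ) 1 \ {(0:ℝ)}} = ∅ := by
        ext t
        simp
      rw [hs, hq0]
      simp
    exact (hmin {(0:ℝ)} (Set.singleton_subset_iff.mpr h0K) isCompact_singleton
      ⟨0, rfl⟩ habs0).symm
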